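/- The Non-commutative Subset Convolution decomposes by cardinality: for f, g : 2^U → ℤ, (f ⋄ g)(X) = ∑_{i+j=|X|} (f_i ⋄_S g_j)(X), where f_i(A) = f(A)·[|A| = i], g_j analogously, and (p ⋄_S q)(X) = ∑_{A △ B = X} p(A)q(B)I(A,B) is the Clifford convolution over symmetric difference. -/

import Mathlib

open scoped symmDiff

/-- `I A B = (-1)^|{(a,b) ∈ A × B : a > b}|`. -/
def Isgn {n : ℕ} (A B : Finset (Fin n)) : ℤ :=
  (-1) ^ ((A ×ˢ B).filter (fun p => p.2 < p.1)).card

/-- Non-commutative Subset Convolution (over disjoint unions). -/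
def nsc {n : ℕ} (f g : Finset (Fin n) → ℤ) (X : Finset (Fin n)) : ℤ :=
  ∑ A ∈ X.powerset, f A * g (X \ A) * Isgn A (X \ A)

/-- Clifford convolution over symmetric differences: `∑_{A ∆ B = X} p(A) q(B) I(A,B)`
(the pair is parameterized by `A` since `A ∆ B = X ↔ B = A ∆ X`). -/
def cliffConv {n : ℕ} (p q : Finset (Fin n) → ℤ) (X : Finset (Fin n)) : ℤ :=
  ∑ A : Finset (Fin n), p A * q (A ∆ X) * Isgn A (A ∆ X)

/-- `f_i(A) = f(A)·[|A| = i]`. -/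
def restrictCard {n : ℕ} (f : Finset (Fin n) → ℤ) (i : ℕ) (A : Finset (Fin n)) : ℤ :=
  if A.card = i then f A else 0

lemma card_add_card_symmDiff_eq_iff {n : ℕ} (A X : Finset (Fin n)) :
    A.card + (A ∆ X).card = X.card ↔ A ⊆ X := by
  have h1 : (A ∆ X).card = (A \ X).card + (X \ A).card := by
    rw [symmDiff_def, Finset.sup_eq_union, Finset.card_union_of_disjoint]
    exact disjoint_sdiff_sdiff
  have h2 : (A \ X).card + (A ∩ X).card = A.card := Finset.card_sdiff_add_card_inter A X
  have h3 : (X \ A).card + (X ∩ A).card = X.card := Finset.card_sdiff_add_card_inter X A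
  have h4 : (A ∩ X).card = (X ∩ A).card := by rw [Finset.inter_comm]
  constructor
  · intro h
    have : (A \ X).card = 0 := by omega
    have : A \ X = ∅ := Finset.card_eq_zero.mp this
    exact Finset.sdiff_eq_empty_iff_subset.mp this
  · intro h
    have : A \ X = ∅ := Finset.sdiff_eq_empty_iff_subset.mpr h
    have h5 : (A \ X).card = 0 := by rw [this]; simp
    omega

theorem nsc_eq_sum_cliffConv {n : ℕ} (f g : Finset (Fin n) → ℤ) (X : Finset (Fin n)) :
    nsc f g X
      = ∑ ij ∈ Finset.HasAntidiagonal.antidiagonal X.card,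
          cliffConv (restrictCard f ij.1) (restrictCard g ij.2) X := by
  unfold nsc cliffConv restrictCard
  rw [Finset.sum_comm]
  have key : ∀ A : Finset (Fin n),
      (∑ ij ∈ Finset.HasAntidiagonal.antidiagonal X.card,
        (if A.card = ij.1 then f A else 0) * (if (A ∆ X).card = ij.2 then g (A ∆ X) else 0)
          * Isgn A (A ∆ X))
      = if A ⊆ X then f A * g (A ∆ X) * Isgn A (A ∆ X) else 0 := by
    intro A
    have : ∀ ij ∈ Finset.HasAntidiagonal.antidiagonal X.card,
        (if A.card = ij.1 then f A else 0) * (if (A ∆ X).card = ij.2 then g (A ∆ X) else 0)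
          * Isgn A (A ∆ X)
        = if ij = (A.card, (A ∆ X).card) then f A * g (A ∆ X) * Isgn A (A ∆ X) else 0 := by
      intro ij _
      by_cases h : ij = (A.card, (A ∆ X).card)
      · subst h; simp
      · rw [if_neg h]
        have h' : ¬(A.card = ij.1) ∨ ¬((A ∆ X).card = ij.2) := by
          by_contra hc
          push_neg at hc
          exact h (Prod.ext hc.1.symm hc.2.symm)
        rcases h' with h1 | h1 <;> simp [h1]
    rw [Finset.sum_congr rfl this, Finset.sum_ite_eq' (Finset.HasAntidiagonal.antidiagonal X.card)]
    simp only [Finset.HasAntidiagonal.mem_antidiagonal, card_add_card_symmDiff_eq_iff]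
  rw [Finset.sum_congr rfl (fun A _ => key A)]
  simp only [← Finset.mem_powerset]
  rw [Finset.sum_ite_mem, Finset.univ_inter]
  refine Finset.sum_congr rfl fun A hA => ?_
  rw [symmDiff_of_le (Finset.le_iff_subset.mpr (Finset.mem_powerset.mp hA))]
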